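/- Let p be an odd prime, L = ⟨−1,2⟩ ≤ (Z/pZ)^× of index 4, and g a primitive root mod p. Then A(1,2) + A(3,2) > 0, where A(i,j) = |(1 + g^i L) ∩ g^j L|. -/

import Mathlib

/-- The coset `g^i H` viewed as a subset of `ZMod p`. -/
def coset (p : ℕ) (g : (ZMod p)ˣ) (H : Subgroup (ZMod p)ˣ) (i : ℤ) : Set (ZMod p) :=
  (fun h : (ZMod p)ˣ => ((g ^ i * h : (ZMod p)ˣ) : ZMod p)) '' (H : Set (ZMod p)ˣ)

/-- The cyclotomic number `A(i,j) = |(1 + g^i H) ∩ g^j H|`. -/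
noncomputable def cyc (p : ℕ) (g : (ZMod p)ˣ) (H : Subgroup (ZMod p)ˣ) (i j : ℤ) : ℕ :=
  (((fun x => 1 + x) '' coset p g H i) ∩ coset p g H j).ncard

section Aux

variable {p : ℕ} [Fact p.Prime] {L : Subgroup (ZMod p)ˣ} {g : (ZMod p)ˣ}

/-- If `g^4 ∈ L` and `4 ∣ k - j` then `g^k ∈ coset j`. -/
lemma mem_coset_of_dvd (hg4 : g ^ (4:ℤ) ∈ L) {k j : ℤ} (h : 4 ∣ k - j) :
    ((g ^ k : (ZMod p)ˣ) : ZMod p) ∈ coset p g L j := by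
  obtain ⟨c, hc⟩ := h
  refine ⟨g ^ (k - j), ?_, ?_⟩
  · show g ^ (k - j) ∈ L
    rw [hc, zpow_mul]
    exact Subgroup.zpow_mem L hg4 c
  · show ((g ^ j * g ^ (k-j) : (ZMod p)ˣ) : ZMod p) = _
    rw [← zpow_add, add_sub_cancel]

lemma isSquare_val_zpow {k : ℤ} (h : 2 ∣ k) : IsSquare ((g ^ k : (ZMod p)ˣ) : ZMod p) := by
  obtain ⟨m, rfl⟩ := h
  exact ⟨((g ^ m : (ZMod p)ˣ) : ZMod p), by rw [← Units.val_mul, ← zpow_add]; ring_nf⟩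

end Aux

theorem stmt_16 (p : ℕ) [Fact p.Prime] (hodd : Odd p)
    (u : (ZMod p)ˣ) (hu : (u : ZMod p) = 2)
    (L : Subgroup (ZMod p)ˣ) (hL : L = Subgroup.closure {-1, u})
    (hℓ : L.index = 4)
    (g : (ZMod p)ˣ) (hg : ∀ x : (ZMod p)ˣ, x ∈ Subgroup.zpowers g) :
    0 < cyc p g L 1 2 + cyc p g L 3 2 := by
  by_contra hcon
  push_neg at hcon
  have hsum : cyc p g L 1 2 + cyc p g L 3 2 = 0 := Nat.le_zero.mp hcon
  have h12 : cyc p g L 1 2 = 0 := by omega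
  have h32 : cyc p g L 3 2 = 0 := by omega
  have hemp1 : ((fun x => 1 + x) '' coset p g L 1) ∩ coset p g L 2 = ∅ :=
    (Set.ncard_eq_zero (Set.toFinite _)).mp h12
  have hemp3 : ((fun x => 1 + x) '' coset p g L 3) ∩ coset p g L 2 = ∅ :=
    (Set.ncard_eq_zero (Set.toFinite _)).mp h32
  -- order of g in the quotient is 4
  have horder : orderOf ((g : (ZMod p)ˣ ⧸ L)) = 4 := by
    have hsur : ∀ y : (ZMod p)ˣ ⧸ L, y ∈ Subgroup.zpowers ((g : (ZMod p)ˣ ⧸ L)) := by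
      intro y
      induction y using QuotientGroup.induction_on with
      | H x =>
        obtain ⟨k, hk⟩ := Subgroup.mem_zpowers_iff.mp (hg x)
        exact Subgroup.mem_zpowers_iff.mpr ⟨k, by rw [← QuotientGroup.mk_zpow, hk]⟩
    have hfin : Finite ((ZMod p)ˣ ⧸ L) := Quotient.finite _
    haveI := Fintype.ofFinite ((ZMod p)ˣ ⧸ L)
    rw [orderOf_eq_card_of_forall_mem_zpowers hsur]
    exact hℓ ▸ rfl
  have hg4 : g ^ (4:ℤ) ∈ L := by
    have : ((g : (ZMod p)ˣ ⧸ L)) ^ (4:ℕ) = 1 := by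
      rw [← horder]; exact pow_orderOf_eq_one _
    rw [← QuotientGroup.mk_pow] at this
    have := (QuotientGroup.eq_one_iff _).mp this
    simpa using this
  -- members of L are squares (in ZMod p)
  have hLsq : ∀ x : (ZMod p)ˣ, x ∈ L → IsSquare ((x : (ZMod p)ˣ) : ZMod p) := by
    intro x hx
    obtain ⟨k, hk⟩ := Subgroup.mem_zpowers_iff.mp (hg x)
    have h1 : ((g : (ZMod p)ˣ ⧸ L)) ^ k = 1 := by
      rw [← QuotientGroup.mk_zpow, hk]
      exact (QuotientGroup.eq_one_iff _).mpr hx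
    have h4 : ((4:ℕ):ℤ) ∣ k := by
      rw [← horder]
      exact orderOf_dvd_iff_zpow_eq_one.mpr h1
    rw [← hk]
    exact isSquare_val_zpow (by omega)
  have hneg1 : IsSquare (-1 : ZMod p) := by
    have : (-1 : (ZMod p)ˣ) ∈ L := by
      rw [hL]; exact Subgroup.subset_closure (by simp)
    simpa using hLsq _ this
  have hnegSq : ∀ y : ZMod p, IsSquare y → IsSquare (-y) := by
    intro y hy
    obtain ⟨a, ha⟩ := hneg1
    obtain ⟨b, hb⟩ := hy
    exact ⟨a * b, by rw [hb]; linear_combination (b * b) * ha⟩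
  -- a nonsquare squared lies in coset 2
  have hsq_coset2 : ∀ s : ZMod p, ¬ IsSquare s → s ^ 2 ∈ coset p g L 2 := by
    intro s hs
    have hs0 : s ≠ 0 := fun h0 => hs (h0 ▸ ⟨0, by ring⟩)
    have hsu : IsUnit s := Ne.isUnit hs0
    obtain ⟨k, hk⟩ := Subgroup.mem_zpowers_iff.mp (hg hsu.unit)
    have hodd_k : ¬ (2 ∣ k) := by
      intro h2
      exact hs (by rw [← hsu.unit_spec, ← hk]; exact isSquare_val_zpow h2)
    have h4 : (4:ℤ) ∣ 2 * k - 2 := by omega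
    have hmem := mem_coset_of_dvd hg4 h4
    have hval : ((g ^ (2*k) : (ZMod p)ˣ) : ZMod p) = s ^ 2 := by
      have h2 : g ^ (2*k) = hsu.unit ^ (2:ℕ) := by
        rw [mul_comm, zpow_mul, hk]; norm_cast
      rw [h2, Units.val_pow_eq_pow_val, hsu.unit_spec]
    rwa [hval] at hmem
  -- key: for nonsquare c, c^2 - 1 = 0 or a square
  have hH : ∀ c : ZMod p, ¬ IsSquare c → (c ^ 2 - 1 = 0 ∨ IsSquare (c ^ 2 - 1)) := by
    intro c hc
    by_cases h0 : c ^ 2 - 1 = 0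
    · exact Or.inl h0
    right
    have hvu : IsUnit (c ^ 2 - 1) := Ne.isUnit h0
    obtain ⟨m, hm⟩ := Subgroup.mem_zpowers_iff.mp (hg hvu.unit)
    by_cases h2 : 2 ∣ m
    · rw [← hvu.unit_spec, ← hm]; exact isSquare_val_zpow h2
    · exfalso
      have hc2 : c ^ 2 ∈ coset p g L 2 := hsq_coset2 c hc
      have hmem : c ^ 2 - 1 ∈ coset p g L 1 ∨ c ^ 2 - 1 ∈ coset p g L 3 := by
        rcases (by omega : (4:ℤ) ∣ m - 1 ∨ (4:ℤ) ∣ m - 3) with h | h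
        · left; have := mem_coset_of_dvd hg4 h; rwa [hm, hvu.unit_spec] at this
        · right; have := mem_coset_of_dvd hg4 h; rwa [hm, hvu.unit_spec] at this
      rcases hmem with h | h
      · have hx : c ^ 2 ∈ ((fun x => 1 + x) '' coset p g L 1) ∩ coset p g L 2 :=
          ⟨⟨c ^ 2 - 1, h, by ring⟩, hc2⟩
        rw [hemp1] at hx; exact hx
      · have hx : c ^ 2 ∈ ((fun x => 1 + x) '' coset p g L 3) ∩ coset p g L 2 :=
          ⟨⟨c ^ 2 - 1, h, by ring⟩, hc2⟩
        rw [hemp3] at hx; exact hx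
  -- star lemma
  have hstar : ∀ s q : ZMod p, ¬ IsSquare s → IsSquare q → q ≠ 0 →
      (IsSquare (s + q) ↔ IsSquare (s - q)) := by
    intro s q hs hq hq0
    have hs0 : s ≠ 0 := fun h0 => hs (h0 ▸ ⟨0, by ring⟩)
    have hsq0 : s + q ≠ 0 := by
      intro h
      apply hs
      have hsq : s = -q := by linear_combination h
      rw [hsq]; exact hnegSq _ hq
    have hsq0' : s - q ≠ 0 := by
      intro h
      apply hs
      have hsq : s = q := by linear_combination h
      rw [hsq]; exact hq
    set c : ZMod p := s * q⁻¹ with hcdef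
    have hcq : c * q = s := by rw [hcdef]; field_simp
    have hc0 : ¬ IsSquare c := by
      rintro ⟨y, hy⟩
      apply hs
      obtain ⟨r, hr⟩ := hq
      refine ⟨r * y, ?_⟩
      rw [← hcq, hy, hr]; ring
    have hkey : IsSquare (s ^ 2 - q ^ 2) := by
      have heq : s ^ 2 - q ^ 2 = q ^ 2 * (c ^ 2 - 1) := by
        linear_combination (-s - c * q) * hcq
      rcases hH c hc0 with h0 | hsqr
      · exfalso
        have hc1 : c = 1 ∨ c = -1 := by
          have hfac : (c - 1) * (c + 1) = 0 := by linear_combination h0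
          rcases mul_eq_zero.mp hfac with h | h
          · left; linear_combination h
          · right; linear_combination h
        rcases hc1 with h | h
        · apply hsq0'; rw [← hcq, h]; ring
        · apply hsq0; rw [← hcq, h]; ring
      · obtain ⟨a, ha⟩ := hsqr
        exact ⟨q * a, by rw [heq, ha]; ring⟩
    have hchi : quadraticChar (ZMod p) (s + q) = quadraticChar (ZMod p) (s - q) := by
      have hmul : quadraticChar (ZMod p) (s + q) * quadraticChar (ZMod p) (s - q) = 1 := by
        rw [← map_mul]
        apply (quadraticChar_one_iff_isSquare (mul_ne_zero hsq0 hsq0')).mpr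
        have hprod : (s + q) * (s - q) = s ^ 2 - q ^ 2 := by ring
        rw [hprod]; exact hkey
      rcases quadraticChar_dichotomy hsq0 with h1 | h1 <;>
        rcases quadraticChar_dichotomy hsq0' with h2 | h2 <;>
        rw [h1, h2] at hmul ⊢ <;> norm_num at hmul
    rw [← quadraticChar_one_iff_isSquare hsq0, ← quadraticChar_one_iff_isSquare hsq0', hchi]
  -- descent: least natural nonsquare
  have hp2 : p ≠ 2 := by
    rintro rfl; exact (by norm_num : ¬ Odd 2) hodd
  have hchar : ringChar (ZMod p) ≠ 2 := by
    rw [ZMod.ringChar_zmod_n]; exact hp2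
  obtain ⟨a, ha⟩ := FiniteField.exists_nonsquare hchar
  haveI : NeZero p := ⟨(Fact.out : p.Prime).ne_zero⟩
  have hPa : ¬ IsSquare ((a.val : ℕ) : ZMod p) := by
    rwa [ZMod.natCast_val, ZMod.cast_id]
  classical
  have hex : ∃ m : ℕ, ¬ IsSquare ((m : ℕ) : ZMod p) := ⟨a.val, hPa⟩
  set n := Nat.find hex with hndef
  have hn : ¬ IsSquare ((n : ℕ) : ZMod p) := Nat.find_spec hex
  have hmin : ∀ m, m < n → IsSquare ((m : ℕ) : ZMod p) := by
    intro m hm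
    by_contra h
    exact Nat.find_min hex hm h
  have hnlt : n < p := lt_of_le_of_lt (Nat.find_le hPa) (ZMod.val_lt a)
  have hn1 : n ≠ 1 := by
    intro h; apply hn; rw [h]; exact ⟨1, by norm_num⟩
  have hn0 : n ≠ 0 := by
    intro h; apply hn; rw [h]; exact ⟨0, by norm_num⟩
  have hcast_ne : ∀ m : ℕ, 0 < m → m < p → ((m : ℕ) : ZMod p) ≠ 0 := by
    intro m hm hmp h
    rw [ZMod.natCast_eq_zero_iff] at h
    have := Nat.le_of_dvd hm h
    omega
  -- claim: every x < p not divisible by n is a square mod p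
  have claim : ∀ x : ℕ, x < p → ¬ (n ∣ x) → IsSquare ((x : ℕ) : ZMod p) := by
    intro x
    induction x using Nat.strong_induction_on with
    | _ x ih =>
    intro hxp hnx
    rcases Nat.lt_or_ge x n with hxn | hxn
    · exact hmin x hxn
    have hxgt : n < x := lt_of_le_of_ne hxn (fun h => hnx (h ▸ dvd_refl n))
    obtain ⟨q, hq⟩ : ∃ q, x = n + q := ⟨x - n, by omega⟩
    have hq_pos : 0 < q := by omega
    have hnq : ¬ n ∣ q := fun h => hnx (by obtain ⟨c, hc⟩ := h; exact ⟨c + 1, by rw [hq, hc]; ring⟩)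
    have hqsq : IsSquare ((q : ℕ) : ZMod p) := ih q (by omega) (by omega) hnq
    have hq0 : ((q : ℕ) : ZMod p) ≠ 0 := hcast_ne q hq_pos (by omega)
    have hiff := hstar ((n : ℕ) : ZMod p) ((q : ℕ) : ZMod p) hn hqsq hq0
    have hxcast : ((n : ℕ) : ZMod p) + ((q : ℕ) : ZMod p) = ((x : ℕ) : ZMod p) := by
      rw [hq]; push_cast; ring
    rcases lt_trichotomy x (2 * n) with h2n | h2n | h2n
    · -- q < n : n - q is a positive natural < n, a square by minimality
      obtain ⟨r, hr⟩ : ∃ r, n = q + r := ⟨n - q, by omega⟩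
      have hrsq : IsSquare ((r : ℕ) : ZMod p) := hmin r (by omega)
      have hsub : ((n : ℕ) : ZMod p) - ((q : ℕ) : ZMod p) = ((r : ℕ) : ZMod p) := by
        rw [hr]; push_cast; ring
      rw [← hxcast]
      exact hiff.mpr (hsub ▸ hrsq)
    · exact absurd ⟨2, by omega⟩ hnx
    · -- q > n : q - n = x - 2n, a square by induction; then negate
      obtain ⟨r, hr⟩ : ∃ r, q = n + r := ⟨q - n, by omega⟩
      have hr_pos : 0 < r := by omega
      have hnr : ¬ n ∣ r := fun h => hnx (by obtain ⟨c, hc⟩ := h; exact ⟨c + 2, by rw [hq, hr, hc]; ring⟩)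
      have hrsq : IsSquare ((r : ℕ) : ZMod p) := ih r (by omega) (by omega) hnr
      have hsub : ((n : ℕ) : ZMod p) - ((q : ℕ) : ZMod p) = -((r : ℕ) : ZMod p) := by
        rw [hr]; push_cast; ring
      rw [← hxcast]
      exact hiff.mpr (hsub ▸ hnegSq _ hrsq)
  -- apply claim to p - n
  have hpn : IsSquare (((p - n : ℕ) : ℕ) : ZMod p) := by
    apply claim (p - n) (by omega)
    intro h
    have hdp : n ∣ p := by
      obtain ⟨c, hc⟩ := h
      exact ⟨c + 1, by rw [Nat.mul_add, Nat.mul_one, ← hc]; omega⟩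
    rcases ((Fact.out : p.Prime).eq_one_or_self_of_dvd n hdp) with h1 | h1
    · exact hn1 h1
    · omega
  have heq : (((p - n : ℕ) : ℕ) : ZMod p) = -((n : ℕ) : ZMod p) := by
    have : ((p : ℕ) : ZMod p) = 0 := ZMod.natCast_self p
    rw [Nat.cast_sub (le_of_lt hnlt), this]; ring
  apply hn
  have := hnegSq _ hpn
  rw [heq] at this
  simpa using this
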